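/- Let K be a non-separable, locally compact Hausdorff space. Then the unit sphere of C₀(K) contains an uncountable (1+)-separated subset; that is, there exists an uncountable set A of norm-one functions in C₀(K) with ‖f − g‖ > 1 for all distinct f, g ∈ A. -/

import Mathlib

open ZeroAtInfty Set Filter Topology

section Aux

variable {K : Type*} [TopologicalSpace K] [LocallyCompactSpace K] [T2Space K]

/-- Evaluation at a point, as a continuous linear map on `C₀(K, ℝ)`. -/
noncomputable def evalC0 (x : K) : C₀(K, ℝ) →L[ℝ] ℝ :=
  LinearMap.mkContinuous
    { toFun := fun f => f x
      map_add' := fun f g => rfl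
      map_smul' := fun c f => rfl } 1
    (fun f => by
      rw [one_mul, Real.norm_eq_abs, ← ZeroAtInftyContinuousMap.norm_toBCF_eq_norm]
      exact (f.toBCF.norm_coe_le_norm x))

@[simp] lemma evalC0_apply (x : K) (f : C₀(K, ℝ)) : evalC0 x f = f x := rfl

lemma le_normC0 (f : C₀(K, ℝ)) (x : K) : |f x| ≤ ‖f‖ := by
  rw [← ZeroAtInftyContinuousMap.norm_toBCF_eq_norm]
  exact f.toBCF.norm_coe_le_norm x

lemma normC0_le {f : C₀(K, ℝ)} {C : ℝ} (h0 : 0 ≤ C) (h : ∀ x, |f x| ≤ C) : ‖f‖ ≤ C := by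
  rw [← ZeroAtInftyContinuousMap.norm_toBCF_eq_norm]
  exact BoundedContinuousFunction.norm_le h0 |>.2 h

/-- A bump function in `C₀(K, ℝ)`: value 1 at `x`, values in `[0,1]`, vanishing off `U`. -/
lemma exists_bumpC0 (x : K) (U : Set K) (hU : IsOpen U) (hx : x ∈ U) :
    ∃ g : C₀(K, ℝ), g x = 1 ∧ (∀ y, g y ∈ Set.Icc (0:ℝ) 1) ∧ ∀ y ∈ Uᶜ, g y = 0 := by
  obtain ⟨g, hg1, hg0, hgc, hgi⟩ := exists_continuous_one_zero_of_isCompact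
    isCompact_singleton hU.isClosed_compl
    (by rw [Set.disjoint_singleton_left]; simpa using hx)
  exact ⟨⟨g, hgc.is_zero_at_infty⟩, hg1 rfl, hgi, fun y hy => hg0 hy⟩

/-- Key construction: given a countable set `D` and a point `x₀` outside its closure,
there is a norm-one function in `C₀` equal to `1` at `x₀` and strictly negative on `D`. -/
lemma exists_peakC0 (D : Set K) (hD : D.Countable) (x₀ : K) (hx : x₀ ∉ closure D) :
    ∃ f : C₀(K, ℝ), ‖f‖ = 1 ∧ f x₀ = 1 ∧ ∀ y ∈ D, f y < 0 := by
  obtain ⟨g, hgx, hgi, hg0⟩ := exists_bumpC0 x₀ (closure D)ᶜ isClosed_closure.isOpen_compl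
    (by simpa using hx)
  have hg0' : ∀ y ∈ closure D, g y = 0 := fun y hy => hg0 y (by simpa using hy)
  rcases D.eq_empty_or_nonempty with hne | hne
  · refine ⟨g, ?_, hgx, by simp [hne]⟩
    refine le_antisymm (normC0_le zero_le_one fun y => ?_) ?_
    · rcases hgi y with ⟨h1, h2⟩
      rw [abs_le]; constructor <;> linarith
    · calc (1:ℝ) = |g x₀| := by rw [hgx]; norm_num
        _ ≤ ‖g‖ := le_normC0 g x₀
  · obtain ⟨u, hu⟩ := hD.exists_eq_range hne
    have hmem : ∀ n, u n ∈ closure D := fun n => subset_closure (by rw [hu]; exact mem_range_self n)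
    have key : ∀ n : ℕ, ∃ h : C₀(K, ℝ), h (u n) = 1 ∧ (∀ y, h y ∈ Set.Icc (0:ℝ) 1)
        ∧ h x₀ = 0 := by
      intro n
      obtain ⟨h, h1, hi, h0⟩ := exists_bumpC0 (u n) ({x₀}ᶜ) isClosed_singleton.isOpen_compl
        (by simp only [mem_compl_iff, mem_singleton_iff]; exact fun e => hx (e ▸ hmem n))
      exact ⟨h, h1, hi, h0 x₀ (by simp)⟩
    choose H H1 Hi H0 using key
    set c : ℕ → ℝ := fun n => (1/2 : ℝ)^n * (1/4) with hc
    have hc0 : ∀ n, 0 ≤ c n := fun n => by positivity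
    have hcsum : Summable c :=
      (summable_geometric_of_lt_one (by norm_num) (by norm_num)).mul_right _
    have hctsum : ∑' n, c n = 1/2 := by
      rw [hc, tsum_mul_right, tsum_geometric_of_lt_one (by norm_num) (by norm_num)]
      norm_num
    have hHn : ∀ n, ‖H n‖ ≤ 1 := fun n => normC0_le zero_le_one fun y => by
      rcases Hi n y with ⟨a, b⟩; rw [abs_le]; constructor <;> linarith
    have hnorm : ∀ n, ‖c n • H n‖ ≤ c n := by
      intro n
      refine le_trans (norm_smul_le (c n) (H n)) ?_
      rw [Real.norm_eq_abs, abs_of_nonneg (hc0 n)]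
      calc c n * ‖H n‖ ≤ c n * 1 := mul_le_mul_of_nonneg_left (hHn n) (hc0 n)
        _ = c n := mul_one _
    have hsum : Summable (fun n => c n • H n) := Summable.of_norm_bounded hcsum hnorm
    set h : C₀(K, ℝ) := ∑' n, c n • H n with hh
    have hterm : ∀ x n, c n * H n x ∈ Set.Icc (0:ℝ) (c n) := by
      intro x n
      rcases Hi n x with ⟨a, b⟩
      constructor
      · exact mul_nonneg (hc0 n) a
      · calc c n * H n x ≤ c n * 1 := mul_le_mul_of_nonneg_left b (hc0 n)
          _ = c n := mul_one _
    have hevsum : ∀ x : K, Summable (fun n => c n * H n x) := by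
      intro x
      refine Summable.of_norm_bounded hcsum fun n => ?_
      rcases hterm x n with ⟨a, b⟩
      rw [Real.norm_eq_abs, abs_of_nonneg a]; exact b
    have heval : ∀ x : K, h x = ∑' n, c n * H n x := by
      intro x
      have := (evalC0 x).map_tsum hsum
      simpa [evalC0_apply, smul_eq_mul] using this
    have hx0 : h x₀ = 0 := by
      rw [heval x₀]
      simp [H0]
    have hhge : ∀ n, c n ≤ h (u n) := by
      intro n
      rw [heval (u n)]
      have := Summable.le_tsum (hevsum (u n)) n (fun m _ => (hterm (u n) m).1)
      simpa [H1 n] using this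
    have hhle : ∀ x, h x ≤ 1/2 := by
      intro x
      rw [heval x, ← hctsum]
      exact Summable.tsum_le_tsum (fun n => (hterm x n).2) (hevsum x) hcsum
    have hhnn : ∀ x, 0 ≤ h x := by
      intro x
      rw [heval x]
      exact tsum_nonneg fun n => (hterm x n).1
    refine ⟨g - h, ?_, ?_, ?_⟩
    · refine le_antisymm (normC0_le zero_le_one fun y => ?_) ?_
      · have hsub : (g - h) y = g y - h y := rfl
        rw [hsub, abs_le]
        constructor <;> linarith [(hgi y).1, (hgi y).2, hhle y, hhnn y]
      · have hsub : (g - h) x₀ = g x₀ - h x₀ := rfl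
        calc (1:ℝ) = |(g - h) x₀| := by rw [hsub, hgx, hx0]; norm_num
          _ ≤ ‖g - h‖ := le_normC0 _ x₀
    · show g x₀ - h x₀ = 1
      rw [hgx, hx0]; ring
    · intro y hy
      obtain ⟨n, rfl⟩ : ∃ n, u n = y := by rw [hu] at hy; exact hy
      show g (u n) - h (u n) < 0
      have hgz : g (u n) = 0 := hg0' _ (hmem n)
      have : (0:ℝ) < c n := by positivity
      have := hhge n
      linarith

end Aux

/-- Let `K` be a non-separable, locally compact Hausdorff space.  Then the
unit sphere of `C₀(K)` contains an uncountable (1+)-separated subset. -/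
theorem uncountable_separated_in_C0_of_nonseparable
    (K : Type*) [TopologicalSpace K] [LocallyCompactSpace K] [T2Space K]
    (hnonsep : ¬ TopologicalSpace.SeparableSpace K) :
    ∃ A : Set C₀(K, ℝ), ¬ A.Countable ∧ (∀ f ∈ A, ‖f‖ = 1) ∧
      ∀ f ∈ A, ∀ g ∈ A, f ≠ g → 1 < ‖f - g‖ := by
  classical
  -- the family of "good" sets of pairs
  set P : Set (Set (C₀(K, ℝ) × K)) :=
    {S | (∀ p ∈ S, ‖p.1‖ = 1 ∧ p.1 p.2 = 1) ∧
      ∀ p ∈ S, ∀ q ∈ S, p ≠ q → p.1 q.2 < 0 ∨ q.1 p.2 < 0} with hP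
  -- Zorn's lemma
  obtain ⟨M, hM⟩ : ∃ M, Maximal (· ∈ P) M := by
    apply zorn_subset
    intro c hcP hchain
    refine ⟨⋃₀ c, ⟨?_, ?_⟩, fun s hs => Set.subset_sUnion_of_mem hs⟩
    · rintro p ⟨s, hs, hps⟩
      exact (hcP hs).1 p hps
    · rintro p ⟨s, hs, hps⟩ q ⟨t, ht, hqt⟩ hpq
      rcases hchain.total hs ht with hst | hts
      · exact (hcP ht).2 p (hst hps) q hqt hpq
      · exact (hcP hs).2 p hps q (hts hqt) hpq
  have hM1 : ∀ p ∈ M, ‖p.1‖ = 1 ∧ p.1 p.2 = 1 := hM.prop.1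
  have hM2 : ∀ p ∈ M, ∀ q ∈ M, p ≠ q → p.1 q.2 < 0 ∨ q.1 p.2 < 0 := hM.prop.2
  -- no countable set is dense
  have hdense : ∀ D : Set K, D.Countable → ∃ x, x ∉ closure D := by
    intro D hD
    by_contra hcon
    push_neg at hcon
    exact hnonsep ⟨⟨D, hD, fun x => hcon x⟩⟩
  -- M is uncountable
  have hMuncount : ¬ M.Countable := by
    intro hMc
    have hDc : (Prod.snd '' M).Countable := hMc.image _
    obtain ⟨x₀, hx₀⟩ := hdense _ hDc
    obtain ⟨f₀, hf₀n, hf₀x, hf₀neg⟩ := exists_peakC0 (Prod.snd '' M) hDc x₀ hx₀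
    have hnotmem : (f₀, x₀) ∉ M := by
      intro hmem
      exact hx₀ (subset_closure ⟨(f₀, x₀), hmem, rfl⟩)
    have hins : insert (f₀, x₀) M ∈ P := by
      constructor
      · rintro p (rfl | hp)
        · exact ⟨hf₀n, hf₀x⟩
        · exact hM1 p hp
      · rintro p (rfl | hp) q (rfl | hq) hpq
        · exact absurd rfl hpq
        · exact Or.inl (hf₀neg _ ⟨q, hq, rfl⟩)
        · exact Or.inr (hf₀neg _ ⟨p, hp, rfl⟩)
        · exact hM2 p hp q hq hpq
    exact hnotmem (hM.2 hins (subset_insert _ _) (mem_insert _ _))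
  -- fst is injective on M
  have hinj : Set.InjOn Prod.fst M := by
    intro p hp q hq hfst
    by_contra hpq
    rcases hM2 p hp q hq hpq with hlt | hlt
    · rw [hfst, (hM1 q hq).2] at hlt; norm_num at hlt
    · rw [← hfst, (hM1 p hp).2] at hlt; norm_num at hlt
  refine ⟨Prod.fst '' M, ?_, ?_, ?_⟩
  · intro hAc
    exact hMuncount ((Set.mapsTo_image _ _).countable_of_injOn hinj hAc)
  · rintro f ⟨p, hp, rfl⟩
    exact (hM1 p hp).1
  · rintro f ⟨p, hp, rfl⟩ g ⟨q, hq, rfl⟩ hfg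
    have hpq : p ≠ q := fun e => hfg (by rw [e])
    have hbound : ∀ y : K, |p.1 y - q.1 y| ≤ ‖p.1 - q.1‖ := by
      intro y
      have : (p.1 - q.1) y = p.1 y - q.1 y := rfl
      rw [← this]
      exact le_normC0 _ y
    rcases hM2 p hp q hq hpq with hlt | hlt
    · calc (1:ℝ) < q.1 q.2 - p.1 q.2 := by rw [(hM1 q hq).2]; linarith
        _ ≤ |p.1 q.2 - q.1 q.2| := by rw [abs_sub_comm]; exact le_abs_self _
        _ ≤ ‖p.1 - q.1‖ := hbound q.2
    · calc (1:ℝ) < p.1 p.2 - q.1 p.2 := by rw [(hM1 p hp).2]; linarith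
        _ ≤ |p.1 p.2 - q.1 p.2| := le_abs_self _
        _ ≤ ‖p.1 - q.1‖ := hbound p.2
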